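/- Let d ≥ 2, 0 < α < d and γ > 0, and let D ⊂ ℝ^d be a bounded set. There exists a constant c > 0, depending only on diam(D), d, α and γ, such that for all x, y, z, w ∈ D with x ≠ y, z ≠ w and y ≠ z: max(min(|x-w|, |y-z|)/|x-y|, 1)^γ · max(min(|x-w|, |y-z|)/|z-w|, 1)^γ · |x-w|^{d-α}/(|x-y|^{d-α}·|z-w|^{d-α}) ≤ c·( |x-y|^{-(d-α+γ)} + |z-w|^{-(d-α+γ)} + |y-z|^{d-α}·|x-y|^{-(d-α)}·|z-w|^{-(d-α)} + |y-z|^{d-α+γ}·|x-y|^{-(d-α)}·|z-w|^{-(d-α+γ)} + |y-z|^{d-α+γ}·|x-y|^{-(d-α+γ)}·|z-w|^{-(d-α)} + |y-z|^{d-α+2γ}·|x-y|^{-(d-α+γ)}·|z-w|^{-(d-α+γ)} ). -/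

import Mathlib

private lemma rpow_comb {t : ℝ} (ht : 0 < t) (s u : ℝ) :
    t ^ (-(s + u)) = (t ^ s)⁻¹ * (t ^ u)⁻¹ := by
  rw [Real.rpow_neg ht.le, Real.rpow_add ht, mul_inv]

private lemma glue {K Rg X A S : ℝ} (hK : 0 ≤ K) (hX : 0 ≤ X) (hXR : X ≤ Rg)
    (hA : 0 ≤ A) (hAS : A ≤ S) : K * (X * A) ≤ K * Rg * S := by
  calc K * (X * A) ≤ K * (Rg * A) :=
        mul_le_mul_of_nonneg_left (mul_le_mul_of_nonneg_right hXR hA) hK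
    _ = (K * Rg) * A := by ring
    _ ≤ (K * Rg) * S := mul_le_mul_of_nonneg_left hAS
        (mul_nonneg hK (hX.trans hXR))

private lemma key {β γ R a b m p : ℝ} (hβ : 0 < β) (hγ : 0 < γ) (hR : 1 ≤ R)
    (ha : 0 < a) (hb : 0 < b) (hm : 0 < m) (hp : 0 ≤ p)
    (haR : a ≤ R) (hbR : b ≤ R) (hmR : m ≤ R) (hpabm : p ≤ a + m + b) :
    (max (min p m / a) 1) ^ γ * (max (min p m / b) 1) ^ γ * (p ^ β / (a ^ β * b ^ β)) ≤
      3 ^ β * R ^ γ *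
        (a ^ (-(β + γ)) + b ^ (-(β + γ)) + m ^ β * a ^ (-β) * b ^ (-β) +
          m ^ (β + γ) * a ^ (-β) * b ^ (-(β + γ)) +
          m ^ (β + γ) * a ^ (-(β + γ)) * b ^ (-β) +
          m ^ (β + 2 * γ) * a ^ (-(β + γ)) * b ^ (-(β + γ))) := by
  have haβ : (0:ℝ) < a ^ β := Real.rpow_pos_of_pos ha β
  have hbβ : (0:ℝ) < b ^ β := Real.rpow_pos_of_pos hb β
  have haγ : (0:ℝ) < a ^ γ := Real.rpow_pos_of_pos ha γ
  have hbγ : (0:ℝ) < b ^ γ := Real.rpow_pos_of_pos hb γ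
  have hmγ : (0:ℝ) < m ^ γ := Real.rpow_pos_of_pos hm γ
  have hRγ : (1:ℝ) ≤ R ^ γ := Real.one_le_rpow hR hγ.le
  have h3β : (0:ℝ) < 3 ^ β := Real.rpow_pos_of_pos (by norm_num) β
  have t1 : (0:ℝ) ≤ a ^ (-(β + γ)) := (Real.rpow_pos_of_pos ha _).le
  have t2 : (0:ℝ) ≤ b ^ (-(β + γ)) := (Real.rpow_pos_of_pos hb _).le
  have t3 : (0:ℝ) ≤ m ^ β * a ^ (-β) * b ^ (-β) := by positivity
  have t4 : (0:ℝ) ≤ m ^ (β + γ) * a ^ (-β) * b ^ (-(β + γ)) := by positivity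
  have t5 : (0:ℝ) ≤ m ^ (β + γ) * a ^ (-(β + γ)) * b ^ (-β) := by positivity
  have t6 : (0:ℝ) ≤ m ^ (β + 2 * γ) * a ^ (-(β + γ)) * b ^ (-(β + γ)) := by positivity
  have ea : a ^ (-(β + γ)) = (a ^ β)⁻¹ * (a ^ γ)⁻¹ := rpow_comb ha β γ
  have eb : b ^ (-(β + γ)) = (b ^ β)⁻¹ * (b ^ γ)⁻¹ := rpow_comb hb β γ
  have em2 : m ^ (β + 2 * γ) = m ^ β * m ^ γ * m ^ γ := by
    rw [two_mul, ← add_assoc, Real.rpow_add hm, Real.rpow_add hm]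
  have hF1 : max (min p m / a) 1 ≤ max m a / a := by
    apply max_le
    · gcongr
      exact le_trans (min_le_right p m) (le_max_left m a)
    · exact (one_le_div ha).mpr (le_max_right m a)
  have hF2 : max (min p m / b) 1 ≤ max m b / b := by
    apply max_le
    · gcongr
      exact le_trans (min_le_right p m) (le_max_left m b)
    · exact (one_le_div hb).mpr (le_max_right m b)
  have step1 : (max (min p m / a) 1) ^ γ * (max (min p m / b) 1) ^ γ * (p ^ β / (a ^ β * b ^ β)) ≤
      (max m a / a) ^ γ * (max m b / b) ^ γ * ((a + m + b) ^ β / (a ^ β * b ^ β)) := by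
    have h1 : (max (min p m / a) 1) ^ γ ≤ (max m a / a) ^ γ :=
      Real.rpow_le_rpow (le_max_of_le_right zero_le_one) hF1 hγ.le
    have h2 : (max (min p m / b) 1) ^ γ ≤ (max m b / b) ^ γ :=
      Real.rpow_le_rpow (le_max_of_le_right zero_le_one) hF2 hγ.le
    have h3 : p ^ β / (a ^ β * b ^ β) ≤ (a + m + b) ^ β / (a ^ β * b ^ β) := by
      have := Real.rpow_le_rpow hp hpabm hβ.le
      gcongr
    have hn1 : (0:ℝ) ≤ (max m a / a) ^ γ := Real.rpow_nonneg (by positivity) γ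
    have hn2 : (0:ℝ) ≤ (max (min p m / b) 1) ^ γ := Real.rpow_nonneg (by positivity) γ
    have hn3 : (0:ℝ) ≤ p ^ β / (a ^ β * b ^ β) := by positivity
    exact mul_le_mul (mul_le_mul h1 h2 hn2 hn1) h3 hn3 (by positivity)
  refine step1.trans ?_
  rcases le_total m a with h1 | h1 <;> rcases le_total m b with h2 | h2
  · -- a ≥ m, b ≥ m
    rw [max_eq_right h1, max_eq_right h2, div_self ha.ne', div_self hb.ne', Real.one_rpow,
      one_mul, one_mul]
    rcases le_total a b with h3 | h3
    · have hb3 : (a + m + b) ^ β ≤ 3 ^ β * b ^ β := by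
        rw [← Real.mul_rpow (by norm_num) hb.le]
        exact Real.rpow_le_rpow (by positivity) (by linarith) hβ.le
      have step2 : (a + m + b) ^ β / (a ^ β * b ^ β) ≤ 3 ^ β * (a ^ γ * a ^ (-(β + γ))) := by
        rw [ea]
        calc (a + m + b) ^ β / (a ^ β * b ^ β) ≤ 3 ^ β * b ^ β / (a ^ β * b ^ β) := by
              gcongr
          _ = 3 ^ β * (a ^ γ * ((a ^ β)⁻¹ * (a ^ γ)⁻¹)) := by field_simp
      refine step2.trans ?_
      exact glue h3β.le haγ.le (Real.rpow_le_rpow ha.le haR hγ.le) t1 (by linarith)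
    · have ha3 : (a + m + b) ^ β ≤ 3 ^ β * a ^ β := by
        rw [← Real.mul_rpow (by norm_num) ha.le]
        exact Real.rpow_le_rpow (by positivity) (by linarith) hβ.le
      have step2 : (a + m + b) ^ β / (a ^ β * b ^ β) ≤ 3 ^ β * (b ^ γ * b ^ (-(β + γ))) := by
        rw [eb]
        calc (a + m + b) ^ β / (a ^ β * b ^ β) ≤ 3 ^ β * a ^ β / (a ^ β * b ^ β) := by
              gcongr
          _ = 3 ^ β * (b ^ γ * ((b ^ β)⁻¹ * (b ^ γ)⁻¹)) := by field_simp
      refine step2.trans ?_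
      exact glue h3β.le hbγ.le (Real.rpow_le_rpow hb.le hbR hγ.le) t2 (by linarith)
  · -- a ≥ m ≥ b
    rw [max_eq_right h1, max_eq_left h2, div_self ha.ne', Real.one_rpow, one_mul]
    have ha3 : (a + m + b) ^ β ≤ 3 ^ β * a ^ β := by
      rw [← Real.mul_rpow (by norm_num) ha.le]
      exact Real.rpow_le_rpow (by positivity) (by linarith) hβ.le
    have step2 : (m / b) ^ γ * ((a + m + b) ^ β / (a ^ β * b ^ β)) ≤
        3 ^ β * (m ^ γ * b ^ (-(β + γ))) := by
      rw [eb, Real.div_rpow hm.le hb.le]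
      calc (m ^ γ / b ^ γ) * ((a + m + b) ^ β / (a ^ β * b ^ β))
          ≤ (m ^ γ / b ^ γ) * ((3 ^ β * a ^ β) / (a ^ β * b ^ β)) := by gcongr
        _ = 3 ^ β * (m ^ γ * ((b ^ β)⁻¹ * (b ^ γ)⁻¹)) := by field_simp
    refine step2.trans ?_
    exact glue h3β.le hmγ.le (Real.rpow_le_rpow hm.le hmR hγ.le) t2 (by linarith)
  · -- b ≥ m ≥ a
    rw [max_eq_left h1, max_eq_right h2, div_self hb.ne', Real.one_rpow, mul_one]
    have hb3 : (a + m + b) ^ β ≤ 3 ^ β * b ^ β := by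
      rw [← Real.mul_rpow (by norm_num) hb.le]
      exact Real.rpow_le_rpow (by positivity) (by linarith) hβ.le
    have step2 : (m / a) ^ γ * ((a + m + b) ^ β / (a ^ β * b ^ β)) ≤
        3 ^ β * (m ^ γ * a ^ (-(β + γ))) := by
      rw [ea, Real.div_rpow hm.le ha.le]
      calc (m ^ γ / a ^ γ) * ((a + m + b) ^ β / (a ^ β * b ^ β))
          ≤ (m ^ γ / a ^ γ) * ((3 ^ β * b ^ β) / (a ^ β * b ^ β)) := by gcongr
        _ = 3 ^ β * (m ^ γ * ((a ^ β)⁻¹ * (a ^ γ)⁻¹)) := by field_simp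
    refine step2.trans ?_
    exact glue h3β.le hmγ.le (Real.rpow_le_rpow hm.le hmR hγ.le) t1 (by linarith)
  · -- m ≥ a, m ≥ b
    rw [max_eq_left h1, max_eq_left h2]
    have hm3 : (a + m + b) ^ β ≤ 3 ^ β * m ^ β := by
      rw [← Real.mul_rpow (by norm_num) hm.le]
      exact Real.rpow_le_rpow (by positivity) (by linarith) hβ.le
    have step2 : (m / a) ^ γ * (m / b) ^ γ * ((a + m + b) ^ β / (a ^ β * b ^ β)) ≤
        3 ^ β * (1 * (m ^ (β + 2 * γ) * a ^ (-(β + γ)) * b ^ (-(β + γ)))) := by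
      rw [ea, eb, em2, Real.div_rpow hm.le ha.le, Real.div_rpow hm.le hb.le]
      calc (m ^ γ / a ^ γ) * (m ^ γ / b ^ γ) * ((a + m + b) ^ β / (a ^ β * b ^ β))
          ≤ (m ^ γ / a ^ γ) * (m ^ γ / b ^ γ) * ((3 ^ β * m ^ β) / (a ^ β * b ^ β)) := by
            gcongr
        _ = 3 ^ β * (1 * (m ^ β * m ^ γ * m ^ γ * ((a ^ β)⁻¹ * (a ^ γ)⁻¹) *
              ((b ^ β)⁻¹ * (b ^ γ)⁻¹))) := by field_simp
    refine step2.trans ?_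
    exact glue h3β.le zero_le_one hRγ t6 (by linarith)

theorem stmt17 {d : ℕ} (hd : 2 ≤ d) {α γ : ℝ} (hα0 : 0 < α) (hαd : α < d) (hγ : 0 < γ)
    {D : Set (EuclideanSpace ℝ (Fin d))} (hDbdd : Bornology.IsBounded D) :
    ∃ c > 0, ∀ x ∈ D, ∀ y ∈ D, ∀ z ∈ D, ∀ w ∈ D, x ≠ y → z ≠ w → y ≠ z →
      (max (min (dist x w) (dist y z) / dist x y) 1) ^ γ *
          (max (min (dist x w) (dist y z) / dist z w) 1) ^ γ *
          (dist x w ^ ((d : ℝ) - α) / (dist x y ^ ((d : ℝ) - α) * dist z w ^ ((d : ℝ) - α))) ≤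
        c * (dist x y ^ (-((d : ℝ) - α + γ)) + dist z w ^ (-((d : ℝ) - α + γ)) +
          dist y z ^ ((d : ℝ) - α) * dist x y ^ (-((d : ℝ) - α)) * dist z w ^ (-((d : ℝ) - α)) +
          dist y z ^ ((d : ℝ) - α + γ) * dist x y ^ (-((d : ℝ) - α)) *
            dist z w ^ (-((d : ℝ) - α + γ)) +
          dist y z ^ ((d : ℝ) - α + γ) * dist x y ^ (-((d : ℝ) - α + γ)) *
            dist z w ^ (-((d : ℝ) - α)) +
          dist y z ^ ((d : ℝ) - α + 2 * γ) * dist x y ^ (-((d : ℝ) - α + γ)) *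
            dist z w ^ (-((d : ℝ) - α + γ))) := by
  obtain ⟨R0, hR0⟩ := Metric.isBounded_iff.mp hDbdd
  set R := max R0 1 with hRdef
  have hR1 : (1:ℝ) ≤ R := le_max_right _ _
  have hβ : (0:ℝ) < (d : ℝ) - α := by
    have : α < (d : ℝ) := hαd
    linarith
  refine ⟨3 ^ ((d : ℝ) - α) * R ^ γ, by positivity, ?_⟩
  intro x hx y hy z hz w hw hxy hzw hyz
  have ha : 0 < dist x y := dist_pos.mpr hxy
  have hb : 0 < dist z w := dist_pos.mpr hzw
  have hm : 0 < dist y z := dist_pos.mpr hyz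
  have haR : dist x y ≤ R := le_trans (hR0 hx hy) (le_max_left _ _)
  have hbR : dist z w ≤ R := le_trans (hR0 hz hw) (le_max_left _ _)
  have hmR : dist y z ≤ R := le_trans (hR0 hy hz) (le_max_left _ _)
  have htri : dist x w ≤ dist x y + dist y z + dist z w := dist_triangle4 x y z w
  exact key hβ hγ hR1 ha hb hm dist_nonneg haR hbR hmR htri
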